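/- Let (X,d,m) be a metric measure space satisfying the volume doubling property VD with constant C_D, let n ∈ ℕ, let N be an n^{-1}-net in (X,d), and let {φ_z}_{z∈N} be the partition of unity given by φ_z := f_{z,2/n}/∑_{w∈N} f_{w,2/n} where f_{x,r}(y) := (1 − r^{-1}d(x,y))^+. Let f : X → ℝ be a continuous function with compact support, and define f_n := ∑_{z∈N} f_{B(z,1/n)} φ_z, where f_{B(z,1/n)} := m(B(z,1/n))^{-1} ∫_{B(z,1/n)} f dm. Then: (i) sup_X |f_n| ≤ sup_X |f|; (ii) |f_n(x) − f(x)| ≤ sup{ |f(z)−f(w)| : z,w ∈ X, d(z,w) < 3/n } for every x ∈ X; (iii) there exists a constant C > 0 depending only on C_D such that |f_n(x) − f_n(y)| ≤ C n (sup_X |f|) d(x,y) for all x,y ∈ X. -/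

import Mathlib

open Metric ENNReal MeasureTheory

/-- `f_{x,r}(y) := (1 − r⁻¹ d(x,y))⁺`. -/
noncomputable def cutFn {X : Type*} [MetricSpace X] (x : X) (r : ℝ) (y : X) : ℝ :=
  max (1 - dist x y / r) 0

/-- A set `N` is `ε`-separated if distinct points of `N` are at distance `≥ ε`. -/
def IsSeparatedSet {X : Type*} [MetricSpace X] (ε : ℝ) (N : Set X) : Prop :=
  ∀ x ∈ N, ∀ y ∈ N, x ≠ y → ε ≤ dist x y

/-- An `ε`-net: an `ε`-separated set that is maximal among `ε`-separated sets. -/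
def IsNet {X : Type*} [MetricSpace X] (ε : ℝ) (N : Set X) : Prop :=
  IsSeparatedSet ε N ∧ ∀ M : Set X, N ⊆ M → IsSeparatedSet ε M → M = N

/-- The normalizing sum `∑_{w∈N} f_{w,r}(y)`. -/
noncomputable def netSum {X : Type*} [MetricSpace X] (r : ℝ) (N : Set X) (y : X) : ℝ :=
  ∑' w : N, cutFn (w : X) r y

/-- The partition-of-unity function `φ_z = f_{z,r} / ∑_{w∈N} f_{w,r}`. -/
noncomputable def pou {X : Type*} [MetricSpace X] (r : ℝ) (N : Set X) (z x : X) : ℝ :=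
  cutFn z r x / netSum r N x

/-- The average `f_{B(z,r)} := m(B(z,r))⁻¹ ∫_{B(z,r)} f dm`. -/
noncomputable def ballAvg {X : Type*} [MetricSpace X] [MeasurableSpace X]
    (m : Measure X) (f : X → ℝ) (z : X) (r : ℝ) : ℝ :=
  (m (Metric.ball z r)).toReal⁻¹ * ∫ y in Metric.ball z r, f y ∂m

/-- The discretization `f_n := ∑_{z∈N} f_{B(z,1/n)} φ_z` of `f` at scale `1/n`. -/
noncomputable def discretize {X : Type*} [MetricSpace X] [MeasurableSpace X]
    (m : Measure X) (N : Set X) (n : ℕ) (f : X → ℝ) (x : X) : ℝ :=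
  ∑' z : N, ballAvg m f (z : X) ((n : ℝ)⁻¹) * pou (2 / (n : ℝ)) N (z : X) x

section Aux

variable {X : Type*} [MetricSpace X]

lemma cutFn_nonneg (x : X) (r : ℝ) (y : X) : 0 ≤ cutFn x r y := le_max_right _ _

lemma cutFn_le_one (x : X) {r : ℝ} (hr : 0 < r) (y : X) : cutFn x r y ≤ 1 := by
  have h : 0 ≤ dist x y / r := div_nonneg dist_nonneg hr.le
  exact max_le (by linarith) zero_le_one

lemma cutFn_eq_zero (x : X) {r : ℝ} (hr : 0 < r) {y : X} (h : r ≤ dist x y) :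
    cutFn x r y = 0 := by
  have h1 : (1:ℝ) ≤ dist x y / r := (one_le_div hr).mpr h
  exact max_eq_right (by linarith)

lemma cutFn_half (x : X) {r : ℝ} (hr : 0 < r) {y : X} (h : dist x y ≤ r / 2) :
    1 / 2 ≤ cutFn x r y := by
  have h1 : dist x y / r ≤ 1 / 2 := by
    rw [div_le_iff₀ hr]; linarith
  exact le_trans (by linarith) (le_max_left _ _)

lemma cutFn_lip (x : X) {r : ℝ} (hr : 0 < r) (y y' : X) :
    |cutFn x r y - cutFn x r y'| ≤ dist y y' / r := by
  have h1 := abs_max_sub_max_le_abs (1 - dist x y / r) (1 - dist x y' / r) 0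
  have h2 : (1 - dist x y / r) - (1 - dist x y' / r) = (dist x y' - dist x y) / r := by ring
  have h3 : |dist x y' - dist x y| ≤ dist y y' := by
    rw [dist_comm x y', dist_comm x y, dist_comm y y']
    exact abs_dist_sub_le y' y x
  calc |cutFn x r y - cutFn x r y'|
      ≤ |(1 - dist x y / r) - (1 - dist x y' / r)| := h1
    _ = |dist x y' - dist x y| / r := by rw [h2, abs_div, abs_of_pos hr]
    _ ≤ dist y y' / r := by gcongr

end Aux

set_option maxHeartbeats 1000000 in
theorem discretize_estimates {X : Type*} [MetricSpace X] [CompleteSpace X]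
    [LocallyCompactSpace X] [TopologicalSpace.SeparableSpace X] [Nontrivial X]
    [MeasurableSpace X] [BorelSpace X] (m : Measure X)
    (hmfin : ∀ K : Set X, IsCompact K → m K < ∞)
    (hmpos : ∀ U : Set X, IsOpen U → U.Nonempty → 0 < m U)
    (C_D : ℝ) (hCD : 1 < C_D)
    (hVD : ∀ (x : X) (r : ℝ), 0 < r →
      m (Metric.ball x (2 * r)) ≤ ENNReal.ofReal C_D * m (Metric.ball x r))
    (n : ℕ) (hn : 0 < n) (N : Set X) (hN : IsNet ((n : ℝ)⁻¹) N)
    (f : X → ℝ) (hf : Continuous f) (hfc : HasCompactSupport f) :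
    (∀ x : X, |discretize m N n f x| ≤ ⨆ y : X, |f y|) ∧
    (∀ x : X, |discretize m N n f x - f x| ≤
      ⨆ p : {p : X × X // dist p.1 p.2 < 3 / (n : ℝ)}, |f (p : X × X).1 - f (p : X × X).2|) ∧
    (∃ C : ℝ, 0 < C ∧ ∀ x y : X, |discretize m N n f x - discretize m N n f y| ≤
      C * (n : ℝ) * (⨆ y : X, |f y|) * dist x y) := by
  classical
  have hn' : (0:ℝ) < n := Nat.cast_pos.mpr hn
  have hninv : (0:ℝ) < (n:ℝ)⁻¹ := by positivity
  have hCD0 : (0:ℝ) < C_D := lt_trans one_pos hCD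
  set r : ℝ := 2 / (n:ℝ) with hrdef
  have hr : 0 < r := by positivity
  have hr2 : r / 2 = (n:ℝ)⁻¹ := by rw [hrdef]; field_simp
  have h3n : r ≤ 3 / (n:ℝ) := by rw [hrdef]; gcongr; norm_num
  -- iterated doubling
  have hVDk : ∀ (x : X) (s : ℝ), 0 < s → ∀ k : ℕ,
      m (ball x (2 ^ k * s)) ≤ (ENNReal.ofReal C_D) ^ k * m (ball x s) := by
    intro x s hs k
    induction k with
    | zero => simp
    | succ k ih =>
      have h2 : (2:ℝ) ^ (k+1) * s = 2 * (2 ^ k * s) := by ring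
      rw [h2]
      calc m (ball x (2 * (2 ^ k * s)))
          ≤ ENNReal.ofReal C_D * m (ball x (2 ^ k * s)) := hVD x _ (by positivity)
        _ ≤ ENNReal.ofReal C_D * ((ENNReal.ofReal C_D) ^ k * m (ball x s)) :=
            mul_le_mul_right ih _
        _ = (ENNReal.ofReal C_D) ^ (k+1) * m (ball x s) := by ring
  have hCDtop : (ENNReal.ofReal C_D) ≠ ⊤ := ofReal_ne_top
  -- balls have finite measure
  have hball_fin : ∀ (x : X) (s : ℝ), m (ball x s) < ⊤ := by
    intro x s
    obtain ⟨K, hK, hKn⟩ := exists_compact_mem_nhds x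
    obtain ⟨ε, hε, hsub⟩ := Metric.mem_nhds_iff.mp hKn
    obtain ⟨k, hk⟩ := pow_unbounded_of_one_lt (s / ε) (one_lt_two (α := ℝ))
    have hsk : s ≤ 2 ^ k * ε := by
      rw [div_lt_iff₀ hε] at hk; linarith
    calc m (ball x s) ≤ m (ball x (2 ^ k * ε)) := measure_mono (ball_subset_ball hsk)
      _ ≤ (ENNReal.ofReal C_D) ^ k * m (ball x ε) := hVDk x ε hε k
      _ ≤ (ENNReal.ofReal C_D) ^ k * m K := mul_le_mul_right (measure_mono hsub) _
      _ < ⊤ := ENNReal.mul_lt_top (ENNReal.pow_lt_top hCDtop.lt_top) (hmfin K hK)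
  have hball_pos : ∀ (x : X) (s : ℝ), 0 < s → 0 < m (ball x s) := fun x s hs =>
    hmpos _ isOpen_ball ⟨x, mem_ball_self hs⟩
  have hball_toReal : ∀ (x : X) (s : ℝ), 0 < s → 0 < (m (ball x s)).toReal := fun x s hs =>
    ENNReal.toReal_pos (hball_pos x s hs).ne' (hball_fin x s).ne
  -- the net covers
  have hsep := hN.1
  have hcover : ∀ x : X, ∃ z ∈ N, dist z x < (n:ℝ)⁻¹ := by
    intro x
    by_contra h
    push_neg at h
    have hxN : x ∉ N := by
      intro hx
      have := h x hx
      rw [dist_self] at this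
      linarith
    have hins : IsSeparatedSet ((n:ℝ)⁻¹) (insert x N) := by
      have hx : ∀ c ∈ N, (n:ℝ)⁻¹ ≤ dist x c := fun c hc => by
        rw [dist_comm]; exact h c hc
      intro a ha b hb hab
      rcases Set.mem_insert_iff.mp ha with ha' | ha'
      · rcases Set.mem_insert_iff.mp hb with hb' | hb'
        · exact absurd (ha'.trans hb'.symm) hab
        · rw [ha']; exact hx b hb'
      · rcases Set.mem_insert_iff.mp hb with hb' | hb'
        · rw [hb', dist_comm]; exact hx a ha'
        · exact hsep a ha' b hb' hab
    have heq := hN.2 _ (Set.subset_insert x N) hins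
    exact hxN (heq ▸ Set.mem_insert x N)
  -- counting: finsets inside the 3/n-neighborhood have bounded card
  set K : ℝ := C_D ^ 4 with hKdef
  have hKpos : 0 < K := by rw [hKdef]; positivity
  have hFcard : ∀ (x : X) (F : Finset X),
      ↑F ⊆ {z | z ∈ N ∧ dist z x < 3 / (n:ℝ)} → (F.card : ℝ) ≤ K := by
    intro x F hF
    set ε2 : ℝ := (2 * (n:ℝ))⁻¹ with he2
    have hε2 : 0 < ε2 := by positivity
    have h2ε : 2 * ε2 = (n:ℝ)⁻¹ := by rw [he2]; field_simp
    have h6ε : (3:ℝ) / (n:ℝ) = 6 * ε2 := by rw [he2]; field_simp; ring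
    have hμpos : 0 < m (ball x (7 * ε2)) := hball_pos x _ (by positivity)
    have hμfin : m (ball x (7 * ε2)) < ⊤ := hball_fin x _
    have hdisj : (↑F : Set X).PairwiseDisjoint (fun z => ball z ε2) := by
      intro a ha b hb hab
      have hd := hsep a (hF ha).1 b (hF hb).1 hab
      refine Set.disjoint_left.mpr ?_
      intro u hua hub
      rw [mem_ball] at hua hub
      have htr : dist a b ≤ dist a u + dist u b := dist_triangle a u b
      rw [dist_comm a u] at htr
      linarith
    have hsub1 : ∀ z ∈ F, ball z ε2 ⊆ ball x (7 * ε2) := by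
      intro z hz u hu
      rw [mem_ball] at hu ⊢
      have hzx : dist z x < 3 / (n:ℝ) := (hF hz).2
      rw [h6ε] at hzx
      calc dist u x ≤ dist u z + dist z x := dist_triangle u z x
        _ < ε2 + 6 * ε2 := by linarith
        _ = 7 * ε2 := by ring
    have hsub2 : ∀ z ∈ F, m (ball x (7 * ε2)) ≤ (ENNReal.ofReal C_D) ^ 4 * m (ball z ε2) := by
      intro z hz
      have hi : ball x (7 * ε2) ⊆ ball z (2 ^ 4 * ε2) := by
        intro u hu
        rw [mem_ball] at hu ⊢
        have hzx : dist z x < 3 / (n:ℝ) := (hF hz).2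
        rw [h6ε] at hzx
        have htr : dist u z ≤ dist u x + dist x z := dist_triangle u x z
        rw [dist_comm x z] at htr
        have : (2:ℝ) ^ 4 * ε2 = 16 * ε2 := by norm_num
        rw [this]
        linarith
      calc m (ball x (7 * ε2)) ≤ m (ball z (2 ^ 4 * ε2)) := measure_mono hi
        _ ≤ (ENNReal.ofReal C_D) ^ 4 * m (ball z ε2) := hVDk z ε2 hε2 4
    have hsum : (F.card : ℝ≥0∞) * m (ball x (7 * ε2)) ≤
        (ENNReal.ofReal C_D) ^ 4 * m (ball x (7 * ε2)) := by
      calc (F.card : ℝ≥0∞) * m (ball x (7 * ε2)) = ∑ _z ∈ F, m (ball x (7 * ε2)) := by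
            rw [Finset.sum_const, nsmul_eq_mul]
        _ ≤ ∑ z ∈ F, (ENNReal.ofReal C_D) ^ 4 * m (ball z ε2) := Finset.sum_le_sum hsub2
        _ = (ENNReal.ofReal C_D) ^ 4 * ∑ z ∈ F, m (ball z ε2) := by rw [Finset.mul_sum]
        _ = (ENNReal.ofReal C_D) ^ 4 * m (⋃ z ∈ F, ball z ε2) := by
            rw [measure_biUnion_finset hdisj (fun b _ => measurableSet_ball)]
        _ ≤ (ENNReal.ofReal C_D) ^ 4 * m (ball x (7 * ε2)) := by
            gcongr
            exact Set.iUnion₂_subset hsub1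
    have hcard' : (F.card : ℝ≥0∞) ≤ (ENNReal.ofReal C_D) ^ 4 := by
      rw [← ENNReal.mul_le_mul_iff_left hμpos.ne' hμfin.ne]
      exact hsum
    have hto : ((F.card : ℝ≥0∞)).toReal ≤ ((ENNReal.ofReal C_D) ^ 4).toReal :=
      ENNReal.toReal_mono (ENNReal.pow_ne_top hCDtop) hcard'
    rw [hKdef]
    simpa [ENNReal.toReal_pow, ENNReal.toReal_ofReal hCD0.le] using hto
  have hTfin : ∀ x : X, {z | z ∈ N ∧ dist z x < 3 / (n:ℝ)}.Finite := by
    intro x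
    by_contra hinf
    obtain ⟨F, hFsub, hFcardeq⟩ := Set.Infinite.exists_subset_card_eq hinf (⌈K⌉₊ + 1)
    have h1 := hFcard x F hFsub
    rw [hFcardeq] at h1
    have h2 : K ≤ (⌈K⌉₊ : ℝ) := Nat.le_ceil K
    push_cast at h1
    linarith
  have hSfin : ∀ x : X, {w : ↥N | dist (w : X) x < 3 / (n:ℝ)}.Finite := by
    intro x
    have heq : {w : ↥N | dist (w : X) x < 3 / (n:ℝ)} =
        Subtype.val ⁻¹' {z | z ∈ N ∧ dist z x < 3 / (n:ℝ)} := by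
      ext w
      simp only [Set.mem_setOf_eq, Set.mem_preimage]
      exact ⟨fun h => ⟨w.2, h⟩, fun h => h.2⟩
    rw [heq]
    exact Set.Finite.preimage (Subtype.val_injective.injOn) (hTfin x)
  have hmem : ∀ (x : X) (w : ↥N), w ∈ (hSfin x).toFinset ↔ dist (w : X) x < 3 / (n:ℝ) := by
    intro x w
    simp [Set.Finite.mem_toFinset]
  have hcard : ∀ x : X, (((hSfin x).toFinset).card : ℝ) ≤ K := by
    intro x
    have himg : (((hSfin x).toFinset).image Subtype.val).card = ((hSfin x).toFinset).card :=
      Finset.card_image_of_injective _ Subtype.val_injective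
    have hsub : ↑(((hSfin x).toFinset).image Subtype.val) ⊆
        {z | z ∈ N ∧ dist z x < 3 / (n:ℝ)} := by
      intro u hu
      rw [Finset.coe_image] at hu
      obtain ⟨w, hw, rfl⟩ := hu
      rw [Finset.mem_coe, hmem] at hw
      exact ⟨w.2, hw⟩
    have := hFcard x _ hsub
    rw [himg] at this
    exact this
  -- tsum reductions
  have hcut_out : ∀ (x : X) (w : ↥N), w ∉ (hSfin x).toFinset → cutFn ↑w r x = 0 := by
    intro x w hw
    have hge : ¬ dist (w : X) x < 3 / (n:ℝ) := fun h => hw ((hmem x w).mpr h)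
    exact cutFn_eq_zero _ hr (le_trans h3n (not_lt.mp hge))
  have hsummable : ∀ x : X, Summable (fun w : ↥N => cutFn ↑w r x) := fun x =>
    summable_of_ne_finset_zero (hcut_out x)
  have hnet' : ∀ (x : X) (t : Finset ↥N), (hSfin x).toFinset ⊆ t →
      netSum r N x = ∑ w ∈ t, cutFn ↑w r x := by
    intro x t ht
    unfold netSum
    rw [tsum_eq_sum (hcut_out x)]
    exact Finset.sum_subset ht (fun w _ hw => hcut_out x w hw)
  have hnetSum_eq : ∀ x : X, netSum r N x = ∑ w ∈ (hSfin x).toFinset, cutFn ↑w r x :=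
    fun x => hnet' x _ (Finset.Subset.refl _)
  have hS_lb : ∀ x : X, 1 / 2 ≤ netSum r N x := by
    intro x
    obtain ⟨z, hzN, hz⟩ := hcover x
    have h1 : 1 / 2 ≤ cutFn z r x := cutFn_half z hr (by rw [hr2]; linarith)
    calc (1:ℝ)/2 ≤ cutFn z r x := h1
      _ ≤ netSum r N x := by
          unfold netSum
          exact Summable.le_tsum (hsummable x) ⟨z, hzN⟩ (fun j _ => cutFn_nonneg _ _ _)
  have hS_pos : ∀ x : X, 0 < netSum r N x := fun x => lt_of_lt_of_le (by norm_num) (hS_lb x)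
  have hpou_nonneg : ∀ (z : X) (x : X), 0 ≤ pou r N z x := fun z x =>
    div_nonneg (cutFn_nonneg _ _ _) (hS_pos x).le
  have hpou_eq_zero : ∀ (x : X) (w : ↥N), w ∉ (hSfin x).toFinset → pou r N ↑w x = 0 := by
    intro x w hw
    unfold pou
    rw [hcut_out x w hw, zero_div]
  have hpou_sum : ∀ x : X, ∑ w ∈ (hSfin x).toFinset, pou r N ↑w x = 1 := by
    intro x
    unfold pou
    rw [← Finset.sum_div, ← hnetSum_eq x, div_self (hS_pos x).ne']
  -- integrability and sup bound
  haveI : IsFiniteMeasureOnCompacts m := ⟨fun {K} hK => hmfin K hK⟩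
  have hfint : Integrable f m := hf.integrable_of_hasCompactSupport hfc
  obtain ⟨x₀, hx₀⟩ := Continuous.exists_forall_ge_of_hasCompactSupport hf.abs hfc.abs
  set M : ℝ := ⨆ y : X, |f y| with hMdef
  have hbdd : BddAbove (Set.range fun y : X => |f y|) := ⟨|f x₀|, by
    rintro _ ⟨y, rfl⟩; exact hx₀ y⟩
  have hfM : ∀ y : X, |f y| ≤ M := fun y => le_ciSup hbdd y
  have hM0 : 0 ≤ M := le_trans (abs_nonneg (f x₀)) (hfM x₀)
  have havg : ∀ z : X, |ballAvg m f z ((n:ℝ)⁻¹)| ≤ M := by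
    intro z
    unfold ballAvg
    have hBfin : m (ball z ((n:ℝ)⁻¹)) < ⊤ := hball_fin _ _
    have hBpos : 0 < (m (ball z ((n:ℝ)⁻¹))).toReal := hball_toReal z _ hninv
    have hint : |∫ y in ball z ((n:ℝ)⁻¹), f y ∂m| ≤ M * (m (ball z ((n:ℝ)⁻¹))).toReal := by
      calc |∫ y in ball z ((n:ℝ)⁻¹), f y ∂m| ≤ ∫ y in ball z ((n:ℝ)⁻¹), |f y| ∂m := by
            simpa [Real.norm_eq_abs] using
              norm_integral_le_integral_norm (μ := m.restrict (ball z ((n:ℝ)⁻¹))) f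
        _ ≤ ∫ _y in ball z ((n:ℝ)⁻¹), M ∂m := by
            apply setIntegral_mono_on hfint.abs.integrableOn
              (integrableOn_const hBfin.ne) measurableSet_ball
            intro y _
            exact hfM y
        _ = (m (ball z ((n:ℝ)⁻¹))).toReal * M := by rw [setIntegral_const, smul_eq_mul, measureReal_def]
        _ = M * (m (ball z ((n:ℝ)⁻¹))).toReal := mul_comm _ _
    calc |(m (ball z ((n:ℝ)⁻¹))).toReal⁻¹ * ∫ y in ball z ((n:ℝ)⁻¹), f y ∂m|
        = (m (ball z ((n:ℝ)⁻¹))).toReal⁻¹ * |∫ y in ball z ((n:ℝ)⁻¹), f y ∂m| := by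
          rw [abs_mul, abs_of_nonneg (inv_nonneg.mpr ENNReal.toReal_nonneg)]
      _ ≤ (m (ball z ((n:ℝ)⁻¹))).toReal⁻¹ * (M * (m (ball z ((n:ℝ)⁻¹))).toReal) :=
          mul_le_mul_of_nonneg_left hint (inv_nonneg.mpr ENNReal.toReal_nonneg)
      _ = M := by rw [mul_comm M, ← mul_assoc, inv_mul_cancel₀ hBpos.ne', one_mul]
  -- discretize as finite sum
  have hterm_out : ∀ (x : X) (w : ↥N), w ∉ (hSfin x).toFinset →
      ballAvg m f ↑w ((n:ℝ)⁻¹) * pou r N ↑w x = 0 := fun x w hw => by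
    rw [hpou_eq_zero x w hw, mul_zero]
  have hdisc' : ∀ (x : X) (t : Finset ↥N), (hSfin x).toFinset ⊆ t →
      discretize m N n f x = ∑ w ∈ t, ballAvg m f ↑w ((n:ℝ)⁻¹) * pou r N ↑w x := by
    intro x t ht
    unfold discretize
    rw [← hrdef, tsum_eq_sum (hterm_out x)]
    exact Finset.sum_subset ht (fun w _ hw => hterm_out x w hw)
  have hdisc : ∀ x : X, discretize m N n f x =
      ∑ w ∈ (hSfin x).toFinset, ballAvg m f ↑w ((n:ℝ)⁻¹) * pou r N ↑w x :=
    fun x => hdisc' x _ (Finset.Subset.refl _)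
  -- part (i)
  have part1 : ∀ x : X, |discretize m N n f x| ≤ M := by
    intro x
    rw [hdisc x]
    calc |∑ w ∈ (hSfin x).toFinset, ballAvg m f ↑w ((n:ℝ)⁻¹) * pou r N ↑w x|
        ≤ ∑ w ∈ (hSfin x).toFinset, |ballAvg m f ↑w ((n:ℝ)⁻¹) * pou r N ↑w x| :=
          Finset.abs_sum_le_sum_abs _ _
      _ ≤ ∑ w ∈ (hSfin x).toFinset, M * pou r N ↑w x := by
          apply Finset.sum_le_sum
          intro w _
          rw [abs_mul, abs_of_nonneg (hpou_nonneg _ _)]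
          exact mul_le_mul_of_nonneg_right (havg _) (hpou_nonneg _ _)
      _ = M * ∑ w ∈ (hSfin x).toFinset, pou r N ↑w x := by rw [Finset.mul_sum]
      _ = M := by rw [hpou_sum x, mul_one]
  refine ⟨part1, ?_, ?_⟩
  · -- part (ii)
    intro x
    haveI hne : Nonempty {p : X × X // dist p.1 p.2 < 3 / (n:ℝ)} :=
      ⟨⟨(x₀, x₀), by rw [dist_self]; positivity⟩⟩
    set Osc : ℝ := ⨆ p : {p : X × X // dist p.1 p.2 < 3 / (n : ℝ)},
      |f (p : X × X).1 - f (p : X × X).2| with hOdef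
    have hObdd : BddAbove (Set.range fun p : {p : X × X // dist p.1 p.2 < 3 / (n:ℝ)} =>
        |f (p : X × X).1 - f (p : X × X).2|) := ⟨2 * |f x₀|, by
      rintro _ ⟨p, rfl⟩
      have h1 := hx₀ (p : X × X).1
      have h2 := hx₀ (p : X × X).2
      have := abs_sub (f (p : X × X).1) (f (p : X × X).2)
      linarith⟩
    have hOpair : ∀ z w : X, dist z w < 3 / (n:ℝ) → |f z - f w| ≤ Osc := fun z w h =>
      le_ciSup hObdd ⟨(z, w), h⟩
    have key : ∀ w : ↥N, pou r N ↑w x ≠ 0 → |ballAvg m f ↑w ((n:ℝ)⁻¹) - f x| ≤ Osc := by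
      intro w hw
      have hzx : dist (↑w : X) x < r := by
        by_contra h
        exact hw (by unfold pou; rw [cutFn_eq_zero _ hr (not_lt.mp h), zero_div])
      have hBfin : m (ball (↑w : X) ((n:ℝ)⁻¹)) < ⊤ := hball_fin _ _
      have hBpos : 0 < (m (ball (↑w : X) ((n:ℝ)⁻¹))).toReal := hball_toReal _ _ hninv
      have heq : ballAvg m f ↑w ((n:ℝ)⁻¹) - f x =
          (m (ball (↑w : X) ((n:ℝ)⁻¹))).toReal⁻¹ *
            ∫ y in ball (↑w : X) ((n:ℝ)⁻¹), (f y - f x) ∂m := by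
        rw [integral_sub hfint.integrableOn (integrableOn_const hBfin.ne)]
        rw [setIntegral_const, smul_eq_mul, measureReal_def]
        unfold ballAvg
        rw [mul_sub, ← mul_assoc, inv_mul_cancel₀ hBpos.ne', one_mul]
      have hbound : |∫ y in ball (↑w : X) ((n:ℝ)⁻¹), (f y - f x) ∂m| ≤
          Osc * (m (ball (↑w : X) ((n:ℝ)⁻¹))).toReal := by
        calc |∫ y in ball (↑w : X) ((n:ℝ)⁻¹), (f y - f x) ∂m|
            ≤ ∫ y in ball (↑w : X) ((n:ℝ)⁻¹), |f y - f x| ∂m := by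
              simpa [Real.norm_eq_abs] using
                norm_integral_le_integral_norm (μ := m.restrict (ball (↑w : X) ((n:ℝ)⁻¹)))
                  (fun y => f y - f x)
          _ ≤ ∫ _y in ball (↑w : X) ((n:ℝ)⁻¹), Osc ∂m := by
              apply setIntegral_mono_on
                ((hfint.integrableOn.sub (integrableOn_const hBfin.ne)).abs)
                (integrableOn_const hBfin.ne) measurableSet_ball
              intro y hy
              apply hOpair
              rw [mem_ball] at hy
              have htr : dist y x ≤ dist y ↑w + dist (↑w : X) x := dist_triangle _ _ _
              have h3 : (n:ℝ)⁻¹ + r = 3 / (n:ℝ) := by rw [hrdef]; field_simp; ring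
              linarith
          _ = (m (ball (↑w : X) ((n:ℝ)⁻¹))).toReal * Osc := by
              rw [setIntegral_const, smul_eq_mul, measureReal_def]
          _ = Osc * (m (ball (↑w : X) ((n:ℝ)⁻¹))).toReal := mul_comm _ _
      rw [heq, abs_mul, abs_of_nonneg (inv_nonneg.mpr ENNReal.toReal_nonneg)]
      calc (m (ball (↑w : X) ((n:ℝ)⁻¹))).toReal⁻¹ *
            |∫ y in ball (↑w : X) ((n:ℝ)⁻¹), (f y - f x) ∂m|
          ≤ (m (ball (↑w : X) ((n:ℝ)⁻¹))).toReal⁻¹ *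
            (Osc * (m (ball (↑w : X) ((n:ℝ)⁻¹))).toReal) :=
            mul_le_mul_of_nonneg_left hbound (inv_nonneg.mpr ENNReal.toReal_nonneg)
        _ = Osc := by rw [mul_comm Osc, ← mul_assoc, inv_mul_cancel₀ hBpos.ne', one_mul]
    have hfx : f x = ∑ w ∈ (hSfin x).toFinset, f x * pou r N ↑w x := by
      rw [← Finset.mul_sum, hpou_sum, mul_one]
    rw [hdisc x]
    calc |∑ w ∈ (hSfin x).toFinset, ballAvg m f ↑w ((n:ℝ)⁻¹) * pou r N ↑w x - f x|
        = |∑ w ∈ (hSfin x).toFinset,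
            (ballAvg m f ↑w ((n:ℝ)⁻¹) * pou r N ↑w x - f x * pou r N ↑w x)| := by
          rw [Finset.sum_sub_distrib, ← hfx]
      _ ≤ ∑ w ∈ (hSfin x).toFinset,
            |ballAvg m f ↑w ((n:ℝ)⁻¹) * pou r N ↑w x - f x * pou r N ↑w x| :=
          Finset.abs_sum_le_sum_abs _ _
      _ ≤ ∑ w ∈ (hSfin x).toFinset, Osc * pou r N ↑w x := by
          apply Finset.sum_le_sum
          intro w _
          rw [← sub_mul, abs_mul, abs_of_nonneg (hpou_nonneg _ _)]
          by_cases hp : pou r N ↑w x = 0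
          · rw [hp, mul_zero, mul_zero]
          · exact mul_le_mul_of_nonneg_right (key w hp) (hpou_nonneg _ _)
      _ = Osc * ∑ w ∈ (hSfin x).toFinset, pou r N ↑w x := by rw [Finset.mul_sum]
      _ = Osc := by rw [hpou_sum x, mul_one]
  · -- part (iii)
    refine ⟨K * (2 + 8 * K), by positivity, ?_⟩
    intro x y
    set t : Finset ↥N := (hSfin x).toFinset ∪ (hSfin y).toFinset with htdef
    have htx : (hSfin x).toFinset ⊆ t := Finset.subset_union_left
    have hty : (hSfin y).toFinset ⊆ t := Finset.subset_union_right
    have hd0 : (0:ℝ) ≤ dist x y := dist_nonneg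
    have hdr0 : (0:ℝ) ≤ dist x y / r := div_nonneg hd0 hr.le
    have hcut_d : ∀ w : ↥N, |cutFn ↑w r x - cutFn ↑w r y| ≤ dist x y / r := fun w =>
      cutFn_lip _ hr x y
    have hcardt : (t.card : ℝ) ≤ 2 * K := by
      have h0 := Finset.card_union_le (hSfin x).toFinset (hSfin y).toFinset
      have h0' : (t.card : ℝ) ≤ (((hSfin x).toFinset).card : ℝ) +
          (((hSfin y).toFinset).card : ℝ) := by
        rw [htdef]; push_cast [← Nat.cast_add]
        exact_mod_cast h0
      have h1 := hcard x
      have h2 := hcard y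
      linarith
    have hSdiff : |netSum r N x - netSum r N y| ≤ (t.card : ℝ) * (dist x y / r) := by
      rw [hnet' x t htx, hnet' y t hty, ← Finset.sum_sub_distrib]
      calc |∑ w ∈ t, (cutFn ↑w r x - cutFn ↑w r y)|
          ≤ ∑ w ∈ t, |cutFn ↑w r x - cutFn ↑w r y| := Finset.abs_sum_le_sum_abs _ _
        _ ≤ ∑ _w ∈ t, dist x y / r := Finset.sum_le_sum (fun w _ => hcut_d w)
        _ = t.card * (dist x y / r) := by rw [Finset.sum_const, nsmul_eq_mul]
    have hpou_diff : ∀ w : ↥N, |pou r N ↑w x - pou r N ↑w y| ≤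
        (2 + 8 * K) * (dist x y / r) := by
      intro w
      have hSx := hS_lb x
      have hSy := hS_lb y
      have hSxpos := hS_pos x
      have hSypos := hS_pos y
      have hid : pou r N ↑w x - pou r N ↑w y =
          (cutFn ↑w r x - cutFn ↑w r y) / netSum r N x +
            cutFn ↑w r y * (netSum r N y - netSum r N x) / (netSum r N x * netSum r N y) := by
        unfold pou
        field_simp
        ring
      rw [hid]
      have h1 : |(cutFn ↑w r x - cutFn ↑w r y) / netSum r N x| ≤ 2 * (dist x y / r) := by
        rw [abs_div, abs_of_pos hSxpos]
        calc |cutFn ↑w r x - cutFn ↑w r y| / netSum r N x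
            ≤ (dist x y / r) / (1/2) := div_le_div₀ hdr0 (hcut_d w) (by norm_num) hSx
          _ = 2 * (dist x y / r) := by ring
      have h2 : |cutFn ↑w r y * (netSum r N y - netSum r N x) /
          (netSum r N x * netSum r N y)| ≤ 8 * K * (dist x y / r) := by
        rw [abs_div, abs_of_pos (mul_pos hSxpos hSypos), abs_mul]
        have hcy1 : |cutFn ↑w r y| ≤ 1 := by
          rw [abs_of_nonneg (cutFn_nonneg _ _ _)]
          exact cutFn_le_one _ hr _
        have hSyx : |netSum r N y - netSum r N x| ≤ 2 * K * (dist x y / r) := by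
          rw [abs_sub_comm]
          calc |netSum r N x - netSum r N y| ≤ t.card * (dist x y / r) := hSdiff
            _ ≤ 2 * K * (dist x y / r) := mul_le_mul_of_nonneg_right hcardt hdr0
        have hnum : |cutFn ↑w r y| * |netSum r N y - netSum r N x| ≤
            2 * K * (dist x y / r) := by
          calc |cutFn ↑w r y| * |netSum r N y - netSum r N x|
              ≤ 1 * (2 * K * (dist x y / r)) :=
                mul_le_mul hcy1 hSyx (abs_nonneg _) one_pos.le
            _ = 2 * K * (dist x y / r) := one_mul _
        have hquart : (1:ℝ)/4 ≤ netSum r N x * netSum r N y := by nlinarith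
        calc |cutFn ↑w r y| * |netSum r N y - netSum r N x| / (netSum r N x * netSum r N y)
            ≤ (2 * K * (dist x y / r)) / (1/4) := by
              apply div_le_div₀ (by positivity) hnum (by norm_num) hquart
          _ = 8 * K * (dist x y / r) := by ring
      calc |(cutFn ↑w r x - cutFn ↑w r y) / netSum r N x +
            cutFn ↑w r y * (netSum r N y - netSum r N x) / (netSum r N x * netSum r N y)|
          ≤ |(cutFn ↑w r x - cutFn ↑w r y) / netSum r N x| +
            |cutFn ↑w r y * (netSum r N y - netSum r N x) /
              (netSum r N x * netSum r N y)| := abs_add_le _ _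
        _ ≤ 2 * (dist x y / r) + 8 * K * (dist x y / r) := add_le_add h1 h2
        _ = (2 + 8 * K) * (dist x y / r) := by ring
    have hdr : dist x y / r = (n:ℝ) * dist x y / 2 := by
      rw [hrdef]; field_simp
    rw [hdisc' x t htx, hdisc' y t hty, ← Finset.sum_sub_distrib]
    calc |∑ w ∈ t, (ballAvg m f ↑w ((n:ℝ)⁻¹) * pou r N ↑w x -
            ballAvg m f ↑w ((n:ℝ)⁻¹) * pou r N ↑w y)|
        ≤ ∑ w ∈ t, |ballAvg m f ↑w ((n:ℝ)⁻¹) * pou r N ↑w x -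
            ballAvg m f ↑w ((n:ℝ)⁻¹) * pou r N ↑w y| := Finset.abs_sum_le_sum_abs _ _
      _ ≤ ∑ _w ∈ t, M * ((2 + 8 * K) * (dist x y / r)) := by
          apply Finset.sum_le_sum
          intro w _
          rw [← mul_sub, abs_mul]
          exact mul_le_mul (havg _) (hpou_diff w) (abs_nonneg _) hM0
      _ = t.card * (M * ((2 + 8 * K) * (dist x y / r))) := by
          rw [Finset.sum_const, nsmul_eq_mul]
      _ ≤ 2 * K * (M * ((2 + 8 * K) * (dist x y / r))) := by
          apply mul_le_mul_of_nonneg_right hcardt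
          have h28 : (0:ℝ) ≤ 2 + 8 * K := by linarith
          positivity
      _ = K * (2 + 8 * K) * (n:ℝ) * M * dist x y := by rw [hdr]; ring
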